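/- Let G be a matching-covered graph, C a separating cut with cut-contractions G₁ and G₂. If G₁ is bipartite, then C is a tight cut of G (every perfect matching of G meets C exactly once). -/

import Mathlib

open Classical Finset

noncomputable section

namespace PaperPM

variable {V : Type} [Fintype V] [DecidableEq V]

/-- `M` is (the edge set of) a perfect matching of `G`. -/
def IsPM (G : SimpleGraph V) (M : Finset (Sym2 V)) : Prop :=
  (M : Set (Sym2 V)) ⊆ G.edgeSet ∧ ∀ v : V, ∃! e, e ∈ M ∧ v ∈ e

/-- `G` is matching-covered: every edge lies in a perfect matching. -/
def MatchingCovered (G : SimpleGraph V) : Prop :=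
  ∀ e ∈ G.edgeSet, ∃ M, IsPM G M ∧ e ∈ M

/-- incidence (indicator) vector of a set of edges -/
def indVec (M : Finset (Sym2 V)) : Sym2 V → ℝ := fun e => if e ∈ M then 1 else 0

/-- the perfect matching polytope of `G` -/
def pmPolytope (G : SimpleGraph V) : Set (Sym2 V → ℝ) :=
  convexHull ℝ {x | ∃ M, IsPM G M ∧ x = indVec M}

/-- the cut `δ(X)`: edges of `G` with exactly one endpoint in `X` -/
def cutE (G : SimpleGraph V) (X : Set V) : Finset (Sym2 V) :=
  Finset.univ.filter fun e =>
    e ∈ G.edgeSet ∧ ∃ u v : V, e = s(u, v) ∧ u ∈ X ∧ v ∉ X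

/-- `x(A) = Σ_{a ∈ A} x_a` -/
def edgeSum (x : Sym2 V → ℝ) (A : Finset (Sym2 V)) : ℝ := ∑ e ∈ A, x e

/-- the face `P(G;C) = P(G) ∩ {x : x(δ(X)) = 1}` -/
def faceCut (G : SimpleGraph V) (X : Set V) : Set (Sym2 V → ℝ) :=
  {x ∈ pmPolytope G | edgeSum x (cutE G X) = 1}

/-- `δ(X)` is a tight cut -/
def TightCut (G : SimpleGraph V) (X : Set V) : Prop :=
  Odd X.toFinset.card ∧ 1 < X.toFinset.card ∧ X.toFinset.card < Fintype.card V - 1 ∧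
    ∀ M, IsPM G M → (M ∩ cutE G X).card = 1

/-- a brick: non-bipartite matching-covered graph without tight cuts -/
def IsBrick (G : SimpleGraph V) : Prop :=
  MatchingCovered G ∧ ¬ G.Colorable 2 ∧ ∀ X : Set V, ¬ TightCut G X

/-- dimension of a subset of `ℝ^{Sym2 V}` (affine dimension; `-1` for the empty set) -/
def polyDim (s : Set (Sym2 V → ℝ)) : ℤ :=
  if s = ∅ then -1 else (Module.finrank ℝ (vectorSpan ℝ s) : ℤ)

/-- number of bricks in a tight cut decomposition of `G`, via the dimension
formula `dim P(G) = |E| − |V| + 1 − b(G)` of Naddef and Edmonds–Pulleyblank–Lovász. -/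
def brickCount (G : SimpleGraph V) : ℤ :=
  (G.edgeFinset.card : ℤ) - Fintype.card V + 1 - polyDim (pmPolytope G)

/-- (the edge set of) a perfect matching of the contraction `G/X`, viewed inside `G`:
no edge inside `X`, exactly one cut edge (covering the contraction vertex), and every
vertex outside `X` covered exactly once. This keeps multiple parallel cut edges distinct. -/
def IsPMContr (G : SimpleGraph V) (X : Set V) (M : Finset (Sym2 V)) : Prop :=
  (M : Set (Sym2 V)) ⊆ G.edgeSet ∧ (∀ e ∈ M, ¬ ∀ v ∈ e, v ∈ X) ∧
    (M ∩ cutE G X).card = 1 ∧ ∀ v : V, v ∉ X → ∃! e, e ∈ M ∧ v ∈ e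

/-- the contraction `G/X` is matching-covered (every one of its edges, i.e. every
edge of `G` not inside `X`, lies in a perfect matching of `G/X`). -/
def MatchingCoveredContr (G : SimpleGraph V) (X : Set V) : Prop :=
  ∀ e ∈ G.edgeSet, (¬ ∀ v ∈ e, v ∈ X) → ∃ M, IsPMContr G X M ∧ e ∈ M

/-- `δ(X)` is a separating cut: odd, nontrivial, and both cut-contractions
`G/X` and `G/X̄` are matching-covered. -/
def SeparatingCut (G : SimpleGraph V) (X : Set V) : Prop :=
  Odd X.toFinset.card ∧ 1 < X.toFinset.card ∧ X.toFinset.card < Fintype.card V - 1 ∧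
    MatchingCoveredContr G X ∧ MatchingCoveredContr G Xᶜ

/-- the edges of the contraction `G/X`, as edges of `G` -/
def contrEdges (G : SimpleGraph V) (X : Set V) : Finset (Sym2 V) :=
  G.edgeFinset.filter fun e => ¬ ∀ v ∈ e, v ∈ X

/-- the perfect matching polytope of the contraction `G/X`, in the coordinates of `G` -/
def contrPolytope (G : SimpleGraph V) (X : Set V) : Set (Sym2 V → ℝ) :=
  convexHull ℝ {x | ∃ M, IsPMContr G X M ∧ x = indVec M}

/-- number of bricks of the contraction `G/X`, via the dimension formula -/
def brickCountContr (G : SimpleGraph V) (X : Set V) : ℤ :=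
  (contrEdges G X).card - ((Fintype.card V - X.toFinset.card : ℕ) + 1) + 1 -
    polyDim (contrPolytope G X)

/-- the contraction `G/X` is a Birkhoff–von Neumann graph: its perfect matching
polytope is cut out by nonnegativity, the degree equations, and `x(δ(X)) = 1`. -/
def BvNContr (G : SimpleGraph V) (X : Set V) : Prop :=
  contrPolytope G X =
    {x | (∀ e, 0 ≤ x e) ∧ (∀ e : Sym2 V, (e ∉ G.edgeSet ∨ ∀ v ∈ e, v ∈ X) → x e = 0) ∧
      (∀ v : V, v ∉ X → edgeSum x (cutE G {v}) = 1) ∧ edgeSum x (cutE G X) = 1}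

/-- the contraction `G/X` is bipartite -/
def ContrBipartite (G : SimpleGraph V) (X : Set V) : Prop :=
  ∃ (c : V → Bool) (b : Bool), ∀ u v : V, G.Adj u v → (u ∉ X ∨ v ∉ X) →
    (if u ∈ X then b else c u) ≠ (if v ∈ X then b else c v)

/-- `G` is a Birkhoff–von Neumann graph -/
def BvN (G : SimpleGraph V) : Prop :=
  pmPolytope G =
    {x | (∀ e, 0 ≤ x e) ∧ (∀ e : Sym2 V, e ∉ G.edgeSet → x e = 0) ∧
      ∀ v : V, edgeSum x (cutE G {v}) = 1}

/-- `F` is a face of the convex set `P` -/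
def IsFaceOf {E : Type*} [AddCommGroup E] [Module ℝ E] (P F : Set E) : Prop :=
  F ⊆ P ∧ Convex ℝ F ∧ ∀ x ∈ P, ∀ y ∈ P, ∀ t : ℝ, 0 < t → t < 1 →
    t • x + (1 - t) • y ∈ F → x ∈ F ∧ y ∈ F

/-- a vector is integral if all its coordinates are integers -/
def Integral (x : Sym2 V → ℝ) : Prop := ∀ e, ∃ n : ℤ, x e = (n : ℝ)

/-- the Petersen graph, as the Kneser graph `K(5,2)` -/
def petersenGraph : SimpleGraph {s : Finset (Fin 5) // s.card = 2} where
  Adj a b := Disjoint (a : Finset (Fin 5)) (b : Finset (Fin 5))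
  symm := ⟨fun _ _ h => h.symm⟩
  loopless := ⟨fun a (h : Disjoint (a : Finset (Fin 5)) a) => by
    have h0 : (a : Finset (Fin 5)) = ∅ := by
      exact (disjoint_self.mp h).trans Finset.bot_eq_empty
    have h2 := a.2
    rw [h0] at h2
    simp at h2⟩



lemma sym2_rep (e : Sym2 V) : ∃ u w, e = s(u, w) :=
  Sym2.ind (fun u w => ⟨u, w, rfl⟩) e

lemma sym2_other {a : V} {z : Sym2 V} (h : a ∈ z) : ∃ b, z = s(a, b) := by
  obtain ⟨u, w, rfl⟩ := sym2_rep z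
  rcases Sym2.mem_iff.mp h with rfl | rfl
  · exact ⟨w, rfl⟩
  · exact ⟨u, Sym2.eq_swap⟩

lemma cutE_compl (G : SimpleGraph V) (X : Set V) : cutE G Xᶜ = cutE G X := by
  ext e
  simp only [cutE, Finset.mem_filter, Finset.mem_univ, true_and, Set.mem_compl_iff, not_not]
  constructor
  · rintro ⟨he, u, v, rfl, hu, hv⟩
    exact ⟨he, v, u, Sym2.eq_swap, hv, hu⟩
  · rintro ⟨he, u, v, rfl, hu, hv⟩
    exact ⟨he, v, u, Sym2.eq_swap, hv, hu⟩

/-- Counting lemma: if every vertex of `X` is covered exactly once by `M`, and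
`c` is a proper 2-coloring with the cut side colored away from `b`, then the
color-imbalance of `X` equals the number of cut edges used by `M`. -/
lemma count_lemma (G : SimpleGraph V) (X : Set V) (c : V → Bool) (b : Bool)
    (h1 : ∀ u v, G.Adj u v → u ∈ X → v ∈ X → c u ≠ c v)
    (h2 : ∀ u v, G.Adj u v → u ∈ X → v ∉ X → c u ≠ b)
    (M : Finset (Sym2 V)) (hsub : (M : Set (Sym2 V)) ⊆ G.edgeSet)
    (hcov : ∀ v ∈ X, ∃! e, e ∈ M ∧ v ∈ e) :
    (X.toFinset.filter fun v => c v ≠ b).card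
      = (X.toFinset.filter fun v => c v = b).card + (M ∩ cutE G X).card := by
  classical
  set Cut := M ∩ cutE G X with hCutdef
  set I := M.filter (fun e => ∀ v ∈ e, v ∈ X) with hIdef
  -- the covering-edge map
  set φ : V → Sym2 V := fun v => if hv : v ∈ X then Classical.choose (hcov v hv) else s(v, v)
    with hφdef
  have hφmem : ∀ v, v ∈ X → φ v ∈ M ∧ v ∈ φ v := by
    intro v hv
    simp only [hφdef, dif_pos hv]
    exact (Classical.choose_spec (hcov v hv)).1
  have hφuniq : ∀ v, ∀ hv : v ∈ X, ∀ e, e ∈ M → v ∈ e → e = φ v := by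
    intro v hv e he hve
    simp only [hφdef, dif_pos hv]
    exact (Classical.choose_spec (hcov v hv)).2 e ⟨he, hve⟩
  -- the "other endpoint" of the covering edge
  have hφrep : ∀ v, v ∈ X → ∃ w, φ v = s(v, w) ∧ G.Adj v w := by
    intro v hv
    obtain ⟨heM, hve⟩ := hφmem v hv
    obtain ⟨w, hw⟩ := sym2_other hve
    refine ⟨w, hw, ?_⟩
    have := hsub heM
    rw [hw] at this
    exact this
  have hdisj : Disjoint I Cut := by
    rw [Finset.disjoint_left]
    intro e heI heC
    simp only [hIdef, Finset.mem_filter] at heI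
    simp only [hCutdef, Finset.mem_inter, cutE, Finset.mem_filter, Finset.mem_univ,
      true_and] at heC
    obtain ⟨-, -, u, v, rfl, -, hv⟩ := heC
    exact hv (heI.2 v (by simp))
  have hbij1 : (X.toFinset.filter fun v => c v = b).card = I.card := by
    apply Finset.card_bij (fun v _ => φ v)
    · intro v hv
      simp only [Finset.mem_filter, Set.mem_toFinset] at hv
      obtain ⟨hvX, hvb⟩ := hv
      obtain ⟨w, hw, hadj⟩ := hφrep v hvX
      have hwX : w ∈ X := by
        by_contra hwn
        exact h2 v w hadj hvX hwn hvb
      simp only [hIdef, Finset.mem_filter]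
      refine ⟨(hφmem v hvX).1, ?_⟩
      rw [hw]
      intro u hu
      rcases Sym2.mem_iff.mp hu with rfl | rfl
      · exact hvX
      · exact hwX
    · intro v1 hv1 v2 hv2 heq
      simp only [Finset.mem_filter, Set.mem_toFinset] at hv1 hv2
      obtain ⟨w, hw, hadj⟩ := hφrep v1 hv1.1
      have hv2e : v2 ∈ φ v1 := heq ▸ (hφmem v2 hv2.1).2
      rw [hw] at hv2e
      rcases Sym2.mem_iff.mp hv2e with rfl | rfl
      · rfl
      · have hwX : v2 ∈ X := hv2.1
        exact absurd (hv1.2.trans hv2.2.symm) (h1 v1 v2 hadj hv1.1 hwX)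
    · intro e heI
      simp only [hIdef, Finset.mem_filter] at heI
      obtain ⟨heM, hall⟩ := heI
      obtain ⟨u, w, rfl⟩ := sym2_rep e
      have huX : u ∈ X := hall u (by simp)
      have hwX : w ∈ X := hall w (by simp)
      have hadj : G.Adj u w := hsub heM
      have hne : c u ≠ c w := h1 u w hadj huX hwX
      rcases eq_or_ne (c u) b with hcu | hcu
      · refine ⟨u, ?_, ?_⟩
        · simp only [Finset.mem_filter, Set.mem_toFinset]; exact ⟨huX, hcu⟩
        · exact (hφuniq u huX _ heM (by simp)).symm
      · have hcw : c w = b := by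
          have h3 : c w = !(c u) := Bool.eq_not_of_ne (Ne.symm hne)
          rw [Bool.eq_not_of_ne hcu] at h3
          simpa using h3
        refine ⟨w, ?_, ?_⟩
        · simp only [Finset.mem_filter, Set.mem_toFinset]; exact ⟨hwX, hcw⟩
        · exact (hφuniq w hwX _ heM (by simp)).symm
  have hbij2 : (X.toFinset.filter fun v => c v ≠ b).card = (I ∪ Cut).card := by
    apply Finset.card_bij (fun v _ => φ v)
    · intro v hv
      simp only [Finset.mem_filter, Set.mem_toFinset] at hv
      obtain ⟨hvX, hvb⟩ := hv
      obtain ⟨w, hw, hadj⟩ := hφrep v hvX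
      rcases Classical.em (w ∈ X) with hwX | hwX
      · apply Finset.mem_union_left
        simp only [hIdef, Finset.mem_filter]
        refine ⟨(hφmem v hvX).1, ?_⟩
        rw [hw]
        intro u hu
        rcases Sym2.mem_iff.mp hu with rfl | rfl
        · exact hvX
        · exact hwX
      · apply Finset.mem_union_right
        simp only [hCutdef, Finset.mem_inter, cutE, Finset.mem_filter, Finset.mem_univ,
          true_and]
        refine ⟨(hφmem v hvX).1, ?_, v, w, hw, hvX, hwX⟩
        have := (hφmem v hvX).1
        exact hsub this
    · intro v1 hv1 v2 hv2 heq
      simp only [Finset.mem_filter, Set.mem_toFinset] at hv1 hv2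
      obtain ⟨w, hw, hadj⟩ := hφrep v1 hv1.1
      have hv2e : v2 ∈ φ v1 := heq ▸ (hφmem v2 hv2.1).2
      rw [hw] at hv2e
      rcases Sym2.mem_iff.mp hv2e with rfl | rfl
      · rfl
      · rcases Classical.em (v2 ∈ X) with hwX | hwX
        · -- both colors ≠ b, but adjacent inside X ⇒ different colors: Bool forces one = b
          have hne := h1 v1 v2 hadj hv1.1 hwX
          exact absurd ((Bool.eq_not_of_ne hv1.2).trans (Bool.eq_not_of_ne hv2.2).symm) hne
        · exact absurd hv2.1 hwX
    · intro e he
      rcases Finset.mem_union.mp he with heI | heC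
      · simp only [hIdef, Finset.mem_filter] at heI
        obtain ⟨heM, hall⟩ := heI
        obtain ⟨u, w, rfl⟩ := sym2_rep e
        have huX : u ∈ X := hall u (by simp)
        have hwX : w ∈ X := hall w (by simp)
        have hadj : G.Adj u w := hsub heM
        have hne : c u ≠ c w := h1 u w hadj huX hwX
        rcases eq_or_ne (c u) b with hcu | hcu
        · have hcw : c w ≠ b := fun h => hne (hcu.trans h.symm)
          refine ⟨w, ?_, ?_⟩
          · simp only [Finset.mem_filter, Set.mem_toFinset]; exact ⟨hwX, hcw⟩
          · exact (hφuniq w hwX _ heM (by simp)).symm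
        · refine ⟨u, ?_, ?_⟩
          · simp only [Finset.mem_filter, Set.mem_toFinset]; exact ⟨huX, hcu⟩
          · exact (hφuniq u huX _ heM (by simp)).symm
      · simp only [hCutdef, Finset.mem_inter, cutE, Finset.mem_filter, Finset.mem_univ,
          true_and] at heC
        obtain ⟨heM, -, u, w, rfl, huX, hwX⟩ := heC
        have hadj : G.Adj u w := hsub heM
        have hcu : c u ≠ b := h2 u w hadj huX hwX
        refine ⟨u, ?_, ?_⟩
        · simp only [Finset.mem_filter, Set.mem_toFinset]; exact ⟨huX, hcu⟩
        · exact (hφuniq u huX _ heM (by simp)).symm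
  rw [hbij1, hbij2, Finset.card_union_of_disjoint hdisj]

/-- if `C = δ(X)` is a separating cut of a matching-covered graph `G`
and the cut-contraction `G₁ = G/X̄` is bipartite, then `C` is a tight cut of `G`. -/
theorem stmt12 (G : SimpleGraph V) (hG : MatchingCovered G) (X : Set V)
    (hsep : SeparatingCut G X) (hbip : ContrBipartite G Xᶜ) :
    TightCut G X := by
  obtain ⟨hodd, hc1, hc2, hX, hXc⟩ := hsep
  obtain ⟨c, b, hb⟩ := hbip
  have h1 : ∀ u v, G.Adj u v → u ∈ X → v ∈ X → c u ≠ c v := by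
    intro u v huv hu hv
    have := hb u v huv (Or.inl (by simpa using hu))
    simpa [Set.mem_compl_iff, hu, hv] using this
  have h2 : ∀ u v, G.Adj u v → u ∈ X → v ∉ X → c u ≠ b := by
    intro u v huv hu hv
    have := hb u v huv (Or.inl (by simpa using hu))
    simpa [Set.mem_compl_iff, hu, hv] using this
  refine ⟨hodd, hc1, hc2, ?_⟩
  intro M hM
  obtain ⟨hMsub, hMcov⟩ := hM
  -- X is nonempty
  have hXne : ∃ v, v ∈ X := by
    by_contra h
    push_neg at h
    have : X.toFinset = ∅ := by
      ext v; simp [h v]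
    rw [this] at hc1
    simp at hc1
  obtain ⟨v0, hv0⟩ := hXne
  obtain ⟨e0, ⟨he0M, hv0e0⟩, -⟩ := hMcov v0
  have he0E : e0 ∈ G.edgeSet := hMsub he0M
  have he0X : ¬ ∀ v ∈ e0, v ∈ Xᶜ := by
    intro h
    exact (h v0 hv0e0) hv0
  obtain ⟨M₁, hM₁, -⟩ := hXc e0 he0E he0X
  obtain ⟨hM₁sub, hM₁in, hM₁cut, hM₁cov⟩ := hM₁
  have hcov₁ : ∀ v ∈ X, ∃! e, e ∈ M₁ ∧ v ∈ e := by
    intro v hv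
    exact hM₁cov v (by simpa using hv)
  have key₁ := count_lemma G X c b h1 h2 M₁ hM₁sub hcov₁
  have key₂ := count_lemma G X c b h1 h2 M hMsub (fun v _ => hMcov v)
  rw [cutE_compl] at hM₁cut
  rw [hM₁cut] at key₁
  omega


end PaperPM
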